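/- Existence of good linear codes for flat errors (Proposition 3.2): Let n, m, k be natural numbers and ε ∈ (0,1] a real number with k ≤ n and (k : ℝ) ≤ n − m − 2·log₂(1/ε), and let S ⊆ 𝔽₂ⁿ be a finite set with |S| = 2^m. Then there exist an injective linear encoder Enc : 𝔽₂ᵏ → 𝔽₂ⁿ and a decoder Dec : 𝔽₂ⁿ → 𝔽₂ᵏ such that for every message x ∈ 𝔽₂ᵏ, the number of z ∈ S with Dec(Enc(x) + z) ≠ x is at most ε·2^m. That is, every flat distribution of entropy m over 𝔽₂ⁿ is correctable with error ε by a linear code of any rate R ≤ 1 − m/n − 2·log₂(1/ε)/n. -/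

import Mathlib

open Finset

private lemma zmod2_add_self' (a : ZMod 2) : a + a = 0 := by
  have h : ∀ x : ZMod 2, x + x = 0 := by decide
  exact h a

private lemma pi_add_self' {n : ℕ} (v : Fin n → ZMod 2) : v + v = 0 := by
  funext i; exact zmod2_add_self' (v i)

private lemma pi_add_eq_zero' {n : ℕ} {a b : Fin n → ZMod 2} (h : a + b = 0) : a = b := by
  funext i
  have h' := congrFun h i
  have h2 : ∀ x y : ZMod 2, x + y = 0 → x = y := by decide
  exact h2 _ _ h'

open Classical in
/-- Existence of good linear codes for flat errors (Proposition 3.2). -/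
theorem exists_good_linear_code_for_flat_errors
    (n m k : ℕ) (ε : ℝ) (hε : 0 < ε) (hε1 : ε ≤ 1) (hk : k ≤ n)
    (hrate : (k : ℝ) ≤ (n : ℝ) - m - 2 * Real.logb 2 (1 / ε))
    (S : Finset (Fin n → ZMod 2)) (hS : S.card = 2 ^ m) :
    ∃ (Enc : (Fin k → ZMod 2) →ₗ[ZMod 2] (Fin n → ZMod 2))
      (Dec : (Fin n → ZMod 2) → (Fin k → ZMod 2)),
      Function.Injective Enc ∧
      ∀ x : Fin k → ZMod 2,
        ((S.filter (fun z => Dec (Enc x + z) ≠ x)).card : ℝ) ≤ ε * 2 ^ m := by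
  haveI : Finite ((Fin k → ZMod 2) →ₗ[ZMod 2] (Fin n → ZMod 2)) :=
    Finite.of_injective
      (fun E : (Fin k → ZMod 2) →ₗ[ZMod 2] (Fin n → ZMod 2) =>
        (E : (Fin k → ZMod 2) → (Fin n → ZMod 2))) DFunLike.coe_injective
  haveI : Fintype ((Fin k → ZMod 2) →ₗ[ZMod 2] (Fin n → ZMod 2)) :=
    Fintype.ofFinite _
  set L := ((Fin k → ZMod 2) →ₗ[ZMod 2] (Fin n → ZMod 2)) with hL
  set N := Fintype.card L with hN
  -- the "bad" set for an encoder
  set B : L → Finset (Fin n → ZMod 2) :=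
    fun E => S.filter (fun z => ∃ w : Fin k → ZMod 2, w ≠ 0 ∧ z + E w ∈ S) with hB
  -- step 0 : the key real inequality 2^(m+k) ≤ ε^2 * 2^n
  have hpow : (2:ℝ) ^ (m + k) ≤ ε ^ 2 * 2 ^ n := by
    have hεpos : (0:ℝ) < 1/ε := by positivity
    have hlog : (2:ℝ) ^ (Real.logb 2 (1/ε)) = 1/ε :=
      Real.rpow_logb (by norm_num) (by norm_num) hεpos
    have hexp : (((m:ℕ)+k : ℕ) : ℝ) + 2 * Real.logb 2 (1/ε) ≤ (n:ℝ) := by push_cast; linarith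
    have h2 : (2:ℝ) ^ ((((m:ℕ)+k : ℕ) : ℝ) + 2 * Real.logb 2 (1/ε)) ≤ (2:ℝ) ^ ((n:ℝ)) :=
      Real.rpow_le_rpow_of_exponent_le one_le_two hexp
    rw [Real.rpow_add (by norm_num), Real.rpow_natCast, Real.rpow_natCast] at h2
    have h3 : (2:ℝ) ^ (2 * Real.logb 2 (1/ε)) = (1/ε)^(2:ℕ) := by
      rw [mul_comm, Real.rpow_mul (by norm_num), hlog]
      norm_num
    rw [h3] at h2
    have hε2 : (0:ℝ) < ε^2 := by positivity
    have := mul_le_mul_of_nonneg_right h2 hε2.le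
    have hone : (1/ε)^(2:ℕ) * ε^2 = 1 := by field_simp
    calc (2:ℝ)^(m+k) = (2:ℝ)^(m+k) * ((1/ε)^(2:ℕ) * ε^2) := by rw [hone, mul_one]
      _ = (2:ℝ)^(m+k) * (1/ε)^(2:ℕ) * ε^2 := by ring
      _ ≤ (2:ℝ)^n * ε^2 := this
      _ = ε^2 * 2^n := by ring
  -- step 1 : fiber counting
  have key : ∀ w : Fin k → ZMod 2, w ≠ 0 → ∀ z : Fin n → ZMod 2,
      (univ.filter (fun E : L => z + E w ∈ S)).card * 2 ^ n = 2 ^ m * N := by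
    intro w hw z
    obtain ⟨i, hi⟩ : ∃ i, w i ≠ 0 := by
      by_contra h; push_neg at h; exact hw (funext fun i => h i)
    have hwi : w i = 1 := by
      have h1 : ∀ a : ZMod 2, a ≠ 0 → a = 1 := by decide
      exact h1 _ hi
    -- all fibers of evaluation at w have equal cardinality
    have hfib : ∀ v : Fin n → ZMod 2,
        (univ.filter (fun E : L => E w = v)).card
          = (univ.filter (fun E : L => E w = 0)).card := by
      intro v
      obtain ⟨D, hDw⟩ : ∃ D : L, D w = v :=
        ⟨LinearMap.smulRight (LinearMap.proj i) v, by
          rw [LinearMap.smulRight_apply, LinearMap.proj_apply, hwi, one_smul]⟩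
      have hDD : D + D = 0 := by
        apply LinearMap.ext; intro x
        simp only [LinearMap.add_apply, LinearMap.zero_apply]
        exact pi_add_self' _
      apply Finset.card_nbij' (fun E => E + D) (fun E => E + D)
      · intro E hE
        simp only [mem_coe, mem_filter, mem_univ, true_and] at hE ⊢
        rw [LinearMap.add_apply, hE, hDw]; exact pi_add_self' _
      · intro E hE
        simp only [mem_coe, mem_filter, mem_univ, true_and] at hE ⊢
        rw [LinearMap.add_apply, hE, hDw, zero_add]
      · intro E _; dsimp only; rw [add_assoc, hDD, add_zero]
      · intro E _; dsimp only; rw [add_assoc, hDD, add_zero]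
    -- the total count over all fibers
    have hcardV : Fintype.card (Fin n → ZMod 2) = 2 ^ n := by
      simp [ZMod.card]
    have hsum : N = 2 ^ n * (univ.filter (fun E : L => E w = 0)).card := by
      have h0 : N = ∑ v : Fin n → ZMod 2,
          (univ.filter (fun E : L => E w = v)).card := by
        rw [hN, ← Finset.card_univ]
        exact Finset.card_eq_sum_card_fiberwise (fun E _ => mem_univ _)
      rw [h0]
      rw [Finset.sum_congr rfl (fun v _ => hfib v), Finset.sum_const, Finset.card_univ,
        hcardV, smul_eq_mul]
    -- split the E-count by the value of E w
    have hsplit : (univ.filter (fun E : L => z + E w ∈ S)).card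
        = ∑ v ∈ univ.filter (fun v : Fin n → ZMod 2 => z + v ∈ S),
            ((univ.filter (fun E : L => z + E w ∈ S)).filter (fun E => E w = v)).card := by
      apply Finset.card_eq_sum_card_fiberwise (f := fun E : L => E w)
      intro E hE
      simp only [mem_coe, mem_filter, mem_univ, true_and] at hE ⊢
      exact hE
    have hinner : ∀ v ∈ univ.filter (fun v : Fin n → ZMod 2 => z + v ∈ S),
        ((univ.filter (fun E : L => z + E w ∈ S)).filter (fun E => E w = v)).card
          = (univ.filter (fun E : L => E w = 0)).card := by
      intro v hv
      simp only [mem_filter, mem_univ, true_and] at hv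
      rw [← hfib v]
      congr 1
      ext E
      simp only [mem_filter, mem_univ, true_and]
      constructor
      · rintro ⟨-, h⟩; exact h
      · intro h; exact ⟨by rw [h]; exact hv, h⟩
    have htcard : (univ.filter (fun v : Fin n → ZMod 2 => z + v ∈ S)).card = 2 ^ m := by
      rw [← hS]
      apply Finset.card_nbij' (fun v => z + v) (fun s => z + s)
      · intro v hv; simp only [mem_coe, mem_filter, mem_univ, true_and] at hv; exact hv
      · intro s hs
        simp only [mem_coe, mem_filter, mem_univ, true_and]
        rw [← add_assoc, pi_add_self', zero_add]; exact hs
      · intro v _; dsimp only; rw [← add_assoc, pi_add_self', zero_add]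
      · intro s _; dsimp only; rw [← add_assoc, pi_add_self', zero_add]
    rw [hsplit, Finset.sum_congr rfl hinner, Finset.sum_const, htcard, smul_eq_mul, hsum]
    ring
  -- step 2 : T * 2^n ≤ 2^k * (2^m * (2^m * N))
  have hT : (∑ E : L, (B E).card) * 2 ^ n ≤ 2 ^ k * (2 ^ m * (2 ^ m * N)) := by
    have step1 : ∀ E : L, (B E).card ≤
        ∑ w ∈ univ.filter (fun w : Fin k → ZMod 2 => w ≠ 0),
          (S.filter (fun z => z + E w ∈ S)).card := by
      intro E
      calc (B E).card ≤ ((univ.filter (fun w : Fin k → ZMod 2 => w ≠ 0)).biUnion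
            (fun w => S.filter (fun z => z + E w ∈ S))).card := by
            apply Finset.card_le_card
            intro z hz
            simp only [hB, mem_filter] at hz
            obtain ⟨hzS, w, hw0, hwS⟩ := hz
            simp only [mem_biUnion, mem_filter, mem_univ, true_and]
            exact ⟨w, hw0, hzS, hwS⟩
        _ ≤ _ := Finset.card_biUnion_le
    have swap : ∀ w : Fin k → ZMod 2,
        (∑ E : L, (S.filter (fun z => z + E w ∈ S)).card)
          = ∑ z ∈ S, (univ.filter (fun E : L => z + E w ∈ S)).card := by
      intro w
      simp_rw [Finset.card_filter]
      exact Finset.sum_comm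
    have step2 : (∑ E : L, (B E).card) ≤
        ∑ w ∈ univ.filter (fun w : Fin k → ZMod 2 => w ≠ 0),
          ∑ z ∈ S, (univ.filter (fun E : L => z + E w ∈ S)).card := by
      calc (∑ E : L, (B E).card)
          ≤ ∑ E : L, ∑ w ∈ univ.filter (fun w : Fin k → ZMod 2 => w ≠ 0),
              (S.filter (fun z => z + E w ∈ S)).card :=
            Finset.sum_le_sum (fun E _ => step1 E)
        _ = ∑ w ∈ univ.filter (fun w : Fin k → ZMod 2 => w ≠ 0),
              ∑ E : L, (S.filter (fun z => z + E w ∈ S)).card := Finset.sum_comm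
        _ = _ := Finset.sum_congr rfl (fun w _ => swap w)
    calc (∑ E : L, (B E).card) * 2 ^ n
        ≤ (∑ w ∈ univ.filter (fun w : Fin k → ZMod 2 => w ≠ 0),
            ∑ z ∈ S, (univ.filter (fun E : L => z + E w ∈ S)).card) * 2 ^ n :=
          Nat.mul_le_mul_right _ step2
      _ = ∑ w ∈ univ.filter (fun w : Fin k → ZMod 2 => w ≠ 0),
            ∑ z ∈ S, (univ.filter (fun E : L => z + E w ∈ S)).card * 2 ^ n := by
          rw [Finset.sum_mul]
          exact Finset.sum_congr rfl (fun w _ => Finset.sum_mul _ _ _)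
      _ = ∑ w ∈ univ.filter (fun w : Fin k → ZMod 2 => w ≠ 0),
            ∑ z ∈ S, 2 ^ m * N := by
          refine Finset.sum_congr rfl (fun w hw => Finset.sum_congr rfl (fun z _ => ?_))
          simp only [mem_filter, mem_univ, true_and] at hw
          exact key w hw z
      _ = (univ.filter (fun w : Fin k → ZMod 2 => w ≠ 0)).card * (S.card * (2 ^ m * N)) := by
          simp [Finset.sum_const, mul_assoc]
      _ ≤ 2 ^ k * (2 ^ m * (2 ^ m * N)) := by
          rw [hS]
          apply Nat.mul_le_mul_right
          calc (univ.filter (fun w : Fin k → ZMod 2 => w ≠ 0)).card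
              ≤ (univ : Finset (Fin k → ZMod 2)).card := Finset.card_filter_le _ _
            _ = 2 ^ k := by rw [Finset.card_univ]; simp [ZMod.card]
  -- step 3 : an explicit injective linear map exists
  have hE0 : ∃ E : L, Function.Injective E := by
    rcases Nat.eq_zero_or_pos k with hk0 | hk0
    · exact ⟨0, fun a b _ => by
        subst hk0; exact Subsingleton.elim a b⟩
    · refine ⟨LinearMap.funLeft (ZMod 2) (ZMod 2)
          (fun j : Fin n => ⟨j.1 % k, Nat.mod_lt _ hk0⟩),
        LinearMap.funLeft_injective_of_surjective _ _ _ ?_⟩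
      intro i
      refine ⟨⟨i.1, lt_of_lt_of_le i.2 hk⟩, ?_⟩
      ext
      simp [Nat.mod_eq_of_lt i.2]
  -- step 4 : Markov / averaging
  have hNpos : 0 < N := Fintype.card_pos
  have hexists : ∃ E : L, Function.Injective E ∧ ((B E).card : ℝ) ≤ ε * 2 ^ m := by
    by_contra hcon
    push_neg at hcon
    have hall : ∀ E : L, ε * 2 ^ m ≤ ((B E).card : ℝ) := by
      intro E
      by_cases hinj : Function.Injective E
      · exact (hcon E hinj).le
      · obtain ⟨a, b, hab, hne⟩ : ∃ a b, E a = E b ∧ a ≠ b := by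
          rw [Function.Injective] at hinj
          push_neg at hinj
          obtain ⟨a, b, h1, h2⟩ := hinj
          exact ⟨a, b, h1, h2⟩
        have hw0 : a + b ≠ 0 := fun h => hne (pi_add_eq_zero' h)
        have hEw : E (a + b) = 0 := by
          rw [map_add, hab]; exact pi_add_self' _
        have hBS : B E = S := by
          rw [hB]
          apply Finset.filter_true_of_mem
          intro z hz
          exact ⟨a + b, hw0, by rw [hEw, add_zero]; exact hz⟩
        rw [hBS, hS]
        have h2m : (0:ℝ) < 2 ^ m := by positivity
        push_cast
        nlinarith
    obtain ⟨E0, hE0inj⟩ := hE0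
    have hlt : (N : ℝ) * (ε * 2 ^ m) < ∑ E : L, ((B E).card : ℝ) := by
      have h := Finset.sum_lt_sum (s := (univ : Finset L))
        (f := fun _ : L => ε * 2 ^ m) (g := fun E : L => ((B E).card : ℝ))
        (fun E _ => hall E) ⟨E0, mem_univ _, hcon E0 hE0inj⟩
      simpa [Finset.sum_const, Finset.card_univ, ← hN, nsmul_eq_mul] using h
    have h2npos : (0:ℝ) < 2 ^ n := by positivity
    have h2mpos : (0:ℝ) < 2 ^ m := by positivity
    have hcast : (∑ E : L, ((B E).card : ℝ)) = ((∑ E : L, (B E).card : ℕ) : ℝ) := by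
      push_cast; rfl
    have h1 : ((∑ E : L, (B E).card : ℕ) : ℝ) * 2 ^ n ≤ 2 ^ k * (2 ^ m * (2 ^ m * N)) := by
      exact_mod_cast hT
    -- combine with hpow : 2^(m+k) ≤ ε^2 * 2^n
    have hmk : (2:ℝ) ^ (m + k) = 2 ^ m * 2 ^ k := pow_add 2 m k
    have hup : (∑ E : L, ((B E).card : ℝ)) * 2 ^ n ≤ (ε ^ 2 * (2 ^ m * N)) * 2 ^ n := by
      rw [hcast]
      calc ((∑ E : L, (B E).card : ℕ) : ℝ) * 2 ^ n
          ≤ 2 ^ k * (2 ^ m * (2 ^ m * N)) := h1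
        _ = ((2:ℝ) ^ (m + k)) * (2 ^ m * N) := by rw [hmk]; ring
        _ ≤ (ε ^ 2 * 2 ^ n) * (2 ^ m * N) := by
            apply mul_le_mul_of_nonneg_right hpow
            positivity
        _ = (ε ^ 2 * (2 ^ m * N)) * 2 ^ n := by ring
    have hup2 : (∑ E : L, ((B E).card : ℝ)) ≤ ε ^ 2 * (2 ^ m * N) :=
      le_of_mul_le_mul_right hup h2npos
    have hfin : ε ^ 2 * (2 ^ m * (N:ℝ)) ≤ (N : ℝ) * (ε * 2 ^ m) := by
      have hN0 : (0:ℝ) ≤ N := Nat.cast_nonneg N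
      nlinarith
    linarith
  -- step 5 : conclude with syndrome-type decoder
  obtain ⟨Enc, hinj, hBE⟩ := hexists
  refine ⟨Enc, fun y => if h : ∃ x, y + Enc x ∈ S then h.choose else 0, hinj, ?_⟩
  intro x
  have hsub : S.filter (fun z =>
      (if h : ∃ x', (Enc x + z) + Enc x' ∈ S then h.choose else 0) ≠ x) ⊆ B Enc := by
    intro z hz
    simp only [mem_filter] at hz
    obtain ⟨hzS, hdec⟩ := hz
    simp only [hB, mem_filter]
    refine ⟨hzS, ?_⟩
    have hex : ∃ x', (Enc x + z) + Enc x' ∈ S := by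
      refine ⟨x, ?_⟩
      have hxx : (Enc x + z) + Enc x = z := by
        have h0 : Enc x + Enc x = 0 := pi_add_self' _
        calc (Enc x + z) + Enc x = z + (Enc x + Enc x) := by ring
          _ = z := by rw [h0, add_zero]
      rw [hxx]; exact hzS
    have hc : (Enc x + z) + Enc hex.choose ∈ S := hex.choose_spec
    have hne : hex.choose ≠ x := by
      intro h
      apply hdec
      rw [dif_pos hex, h]
    refine ⟨x + hex.choose, fun h => hne (pi_add_eq_zero' h).symm, ?_⟩
    rw [map_add]
    have hrw : z + (Enc x + Enc hex.choose) = (Enc x + z) + Enc hex.choose := by ring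
    rw [hrw]; exact hc
  calc ((S.filter _).card : ℝ) ≤ ((B Enc).card : ℝ) := by
        exact_mod_cast Finset.card_le_card hsub
    _ ≤ ε * 2 ^ m := hBE
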